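/- For the Cesàro-type kernel P_n^{α,δ}(x;y) := Σ_{k=0}^n A_{n-k}^δ Σ_{|ν|=k} L_ν^α(x) L_ν^α(y) / L_ν^α(0) with A_m^δ = binom(m+δ, m), one has P_n^{α,δ}(x, 0) = L_n^{|α|+δ+d}(|x|), where |x| = x₁+⋯+x_d and L_ν^α(x) = ∏ᵢ L_{νᵢ}^{αᵢ}(xᵢ). -/

import Mathlib

open Finset Finset.Nat

noncomputable def lag (a : ℝ) (n : ℕ) (x : ℝ) : ℝ :=
  ∑ k ∈ Finset.range (n+1),
    ((∏ i ∈ Finset.range (n-k), (a + k + 1 + i)) / (Nat.factorial (n-k))) *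
      (-x) ^ k / (Nat.factorial k)

/-- The Cesàro binomial coefficient A_m^δ = binom(m+δ, m). -/
noncomputable def Ad (δ : ℝ) (m : ℕ) : ℝ :=
  (∏ i ∈ Finset.range m, (δ + 1 + i)) / (Nat.factorial m)

noncomputable def F (u : ℝ) (m : ℕ) : ℝ := (∏ i ∈ Finset.range m, (u + 1 + i)) / Nat.factorial m

lemma lag_eq (a : ℝ) (n : ℕ) (x : ℝ) :
    lag a n x = ∑ pr ∈ antidiagonal n, F (a + pr.1) pr.2 * ((-x)^pr.1 / Nat.factorial pr.1) := by
  rw [Finset.Nat.sum_antidiagonal_eq_sum_range_succ_mk]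
  unfold lag F
  refine Finset.sum_congr rfl fun k _ => ?_
  rw [mul_div_assoc]

lemma binom_sum (x y : ℝ) (m : ℕ) :
    ∑ pq ∈ antidiagonal m, ((-x)^pq.1 / Nat.factorial pq.1) * ((-y)^pq.2 / Nat.factorial pq.2)
      = (-(x+y))^m / Nat.factorial m := by
  rw [Finset.Nat.sum_antidiagonal_eq_sum_range_succ_mk]
  rw [neg_add, add_pow, Finset.sum_div]
  refine Finset.sum_congr rfl fun k hk => ?_
  have hk' : k ≤ m := Nat.lt_succ_iff.mp (Finset.mem_range.mp hk)
  have hfact : ((m.choose k : ℝ)) * (Nat.factorial k * Nat.factorial (m-k)) = Nat.factorial m := by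
    have := Nat.choose_mul_factorial_mul_factorial hk'
    push_cast [← this]
    ring
  have h1 : (Nat.factorial k : ℝ) ≠ 0 := by positivity
  have h2 : (Nat.factorial (m-k) : ℝ) ≠ 0 := by positivity
  have h3 : (Nat.factorial m : ℝ) ≠ 0 := by positivity
  rw [div_mul_div_comm, div_eq_div_iff (by positivity) h3, mul_comm ((-x)^k * (-y)^(m-k) * (m.choose k : ℝ))]
  rw [← hfact]; ring

lemma F_succ (u : ℝ) (m : ℕ) : (m+1 : ℝ) * F u (m+1) = (u + m + 1) * F u m := by
  unfold F
  rw [Finset.prod_range_succ, Nat.factorial_succ]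
  push_cast
  field_simp
  ring

lemma vand (u v : ℝ) : ∀ m : ℕ, ∑ p ∈ antidiagonal m, F u p.1 * F v p.2 = F (u + v + 1) m := by
  intro m
  induction m with
  | zero => simp [F]
  | succ m ih =>
    have key : (m+1 : ℝ) * ∑ p ∈ antidiagonal (m+1), F u p.1 * F v p.2
        = (m+1 : ℝ) * F (u + v + 1) (m+1) := by
      rw [Finset.mul_sum]
      have h1 : ∀ p ∈ antidiagonal (m+1), (m+1:ℝ) * (F u p.1 * F v p.2)
          = (p.1 : ℝ) * F u p.1 * F v p.2 + (p.2 : ℝ) * F v p.2 * F u p.1 := by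
        intro p hp
        have h := Finset.HasAntidiagonal.mem_antidiagonal.mp hp
        have h' : (p.1 : ℝ) + p.2 = m + 1 := by exact_mod_cast congrArg (Nat.cast (R := ℝ)) h
        rw [← h']; ring
      rw [Finset.sum_congr rfl h1, Finset.sum_add_distrib]
      rw [Finset.Nat.sum_antidiagonal_succ (f := fun p => (p.1 : ℝ) * F u p.1 * F v p.2)]
      rw [Finset.Nat.sum_antidiagonal_succ' (f := fun p => (p.2 : ℝ) * F v p.2 * F u p.1)]
      simp only [Nat.cast_zero, zero_mul, zero_add, Nat.cast_add, Nat.cast_one]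
      have h2 : ∀ p ∈ antidiagonal m, ((p.1:ℝ)+1) * F u (p.1+1) * F v p.2
          = (u + (p.1:ℝ) + 1) * (F u p.1 * F v p.2) := by
        intro p _
        rw [mul_assoc ((p.1:ℝ)+1), ← mul_assoc, F_succ, mul_assoc]
      have h3 : ∀ p ∈ antidiagonal m, ((p.2:ℝ)+1) * F v (p.2+1) * F u p.1
          = (v + (p.2:ℝ) + 1) * (F u p.1 * F v p.2) := by
        intro p _
        rw [mul_assoc ((p.2:ℝ)+1), ← mul_assoc, F_succ, mul_assoc, mul_comm (F v p.2)]
      rw [Finset.sum_congr rfl h2, Finset.sum_congr rfl h3, ← Finset.sum_add_distrib]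
      have h4 : ∀ p ∈ antidiagonal m,
          (u + (p.1:ℝ) + 1) * (F u p.1 * F v p.2) + (v + (p.2:ℝ) + 1) * (F u p.1 * F v p.2)
          = (u + v + (m:ℝ) + 2) * (F u p.1 * F v p.2) := by
        intro p hp
        have h := Finset.HasAntidiagonal.mem_antidiagonal.mp hp
        have h' : (p.1 : ℝ) + p.2 = m := by exact_mod_cast congrArg (Nat.cast (R := ℝ)) h
        rw [← add_mul]; congr 1; linarith
      rw [Finset.sum_congr rfl h4, ← Finset.mul_sum, ih, F_succ]
      ring
    have hm : (m+1 : ℝ) ≠ 0 := by positivity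
    exact mul_left_cancel₀ hm key

lemma quad (n : ℕ) (f : ℕ → ℕ → ℕ → ℕ → ℝ) :
    ∑ jk ∈ antidiagonal n, ∑ pr ∈ antidiagonal jk.1, ∑ qs ∈ antidiagonal jk.2,
        f pr.1 pr.2 qs.1 qs.2
  = ∑ mt ∈ antidiagonal n, ∑ pq ∈ antidiagonal mt.1, ∑ rs ∈ antidiagonal mt.2,
        f pq.1 rs.1 pq.2 rs.2 := by
  have L : ∀ jk : ℕ × ℕ, ∑ pr ∈ antidiagonal jk.1, ∑ qs ∈ antidiagonal jk.2,
      f pr.1 pr.2 qs.1 qs.2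
      = ∑ z ∈ antidiagonal jk.1 ×ˢ antidiagonal jk.2, f z.1.1 z.1.2 z.2.1 z.2.2 := by
    intro jk; rw [Finset.sum_product]
  have R : ∀ mt : ℕ × ℕ, ∑ pq ∈ antidiagonal mt.1, ∑ rs ∈ antidiagonal mt.2,
      f pq.1 rs.1 pq.2 rs.2
      = ∑ z ∈ antidiagonal mt.1 ×ˢ antidiagonal mt.2, f z.1.1 z.2.1 z.1.2 z.2.2 := by
    intro mt; rw [Finset.sum_product]
  simp only [L, R]
  rw [Finset.sum_sigma' (f := fun jk (z : (ℕ×ℕ)×(ℕ×ℕ)) => f z.1.1 z.1.2 z.2.1 z.2.2)]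
  rw [Finset.sum_sigma' (f := fun mt (z : (ℕ×ℕ)×(ℕ×ℕ)) => f z.1.1 z.2.1 z.1.2 z.2.2)]
  refine Finset.sum_bij' (i := fun (z : Σ _ : ℕ × ℕ, (ℕ×ℕ)×(ℕ×ℕ)) _ =>
      (⟨(z.2.1.1 + z.2.2.1, z.2.1.2 + z.2.2.2),
      ((z.2.1.1, z.2.2.1), (z.2.1.2, z.2.2.2))⟩ : Σ _ : ℕ × ℕ, (ℕ×ℕ)×(ℕ×ℕ)))
    (j := fun (w : Σ _ : ℕ × ℕ, (ℕ×ℕ)×(ℕ×ℕ)) _ =>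
      (⟨(w.2.1.1 + w.2.2.1, w.2.1.2 + w.2.2.2),
      ((w.2.1.1, w.2.2.1), (w.2.1.2, w.2.2.2))⟩ : Σ _ : ℕ × ℕ, (ℕ×ℕ)×(ℕ×ℕ))) ?_ ?_ ?_ ?_ ?_
  · rintro ⟨⟨j,k⟩,⟨⟨p,r⟩,⟨q,s⟩⟩⟩ hz
    simp only [Finset.mem_sigma, Finset.mem_product, Finset.HasAntidiagonal.mem_antidiagonal] at hz ⊢
    exact ⟨by omega, trivial, trivial⟩
  · rintro ⟨⟨m,t⟩,⟨⟨p,q⟩,⟨r,s⟩⟩⟩ hw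
    simp only [Finset.mem_sigma, Finset.mem_product, Finset.HasAntidiagonal.mem_antidiagonal] at hw ⊢
    exact ⟨by omega, trivial, trivial⟩
  · rintro ⟨⟨j,k⟩,⟨⟨p,r⟩,⟨q,s⟩⟩⟩ hz
    simp only [Finset.mem_sigma, Finset.mem_product, Finset.HasAntidiagonal.mem_antidiagonal] at hz
    refine Sigma.ext ?_ (heq_of_eq rfl)
    simp only []
    rw [Prod.ext_iff]
    constructor <;> omega
  · rintro ⟨⟨m,t⟩,⟨⟨p,q⟩,⟨r,s⟩⟩⟩ hw
    simp only [Finset.mem_sigma, Finset.mem_product, Finset.HasAntidiagonal.mem_antidiagonal] at hw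
    refine Sigma.ext ?_ (heq_of_eq rfl)
    simp only []
    rw [Prod.ext_iff]
    constructor <;> omega
  · intro z _; rfl

lemma conv (a b x y : ℝ) (n : ℕ) :
    ∑ jk ∈ antidiagonal n, lag a jk.1 x * lag b jk.2 y = lag (a+b+1) n (x+y) := by
  have step1 : ∑ jk ∈ antidiagonal n, lag a jk.1 x * lag b jk.2 y
      = ∑ jk ∈ antidiagonal n, ∑ pr ∈ antidiagonal jk.1, ∑ qs ∈ antidiagonal jk.2,
          (F (a + pr.1) pr.2 * ((-x)^pr.1 / Nat.factorial pr.1)) *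
          (F (b + qs.1) qs.2 * ((-y)^qs.1 / Nat.factorial qs.1)) := by
    refine Finset.sum_congr rfl fun jk _ => ?_
    rw [lag_eq, lag_eq, Finset.sum_mul_sum]
  rw [step1]
  rw [quad n (fun p r q s => (F (a + p) r * ((-x)^p / Nat.factorial p)) *
      (F (b + q) s * ((-y)^q / Nat.factorial q)))]
  rw [lag_eq]
  refine Finset.sum_congr rfl fun mt hmt => ?_
  have key : ∀ pq ∈ antidiagonal mt.1,
      ∑ rs ∈ antidiagonal mt.2, (F (a + pq.1) rs.1 * ((-x)^pq.1 / Nat.factorial pq.1)) *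
          (F (b + pq.2) rs.2 * ((-y)^pq.2 / Nat.factorial pq.2))
      = F (a + b + 1 + mt.1) mt.2 *
          (((-x)^pq.1 / Nat.factorial pq.1) * ((-y)^pq.2 / Nat.factorial pq.2)) := by
    intro pq hpq
    have hsum : pq.1 + pq.2 = mt.1 := Finset.HasAntidiagonal.mem_antidiagonal.mp hpq
    have : ∑ rs ∈ antidiagonal mt.2, F (a + pq.1) rs.1 * F (b + pq.2) rs.2
        = F (a + pq.1 + (b + pq.2) + 1) mt.2 := vand _ _ _
    calc ∑ rs ∈ antidiagonal mt.2, (F (a + pq.1) rs.1 * ((-x)^pq.1 / Nat.factorial pq.1)) *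
          (F (b + pq.2) rs.2 * ((-y)^pq.2 / Nat.factorial pq.2))
        = (∑ rs ∈ antidiagonal mt.2, F (a + pq.1) rs.1 * F (b + pq.2) rs.2) *
          (((-x)^pq.1 / Nat.factorial pq.1) * ((-y)^pq.2 / Nat.factorial pq.2)) := by
          rw [Finset.sum_mul]; exact Finset.sum_congr rfl fun rs _ => by ring
      _ = F (a + b + 1 + mt.1) mt.2 *
          (((-x)^pq.1 / Nat.factorial pq.1) * ((-y)^pq.2 / Nat.factorial pq.2)) := by
          rw [this]
          congr 2
          have : ((pq.1 : ℝ)) + pq.2 = mt.1 := by exact_mod_cast congrArg (Nat.cast (R := ℝ)) hsum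
          linarith
  rw [Finset.sum_congr rfl key, ← Finset.mul_sum, binom_sum]

lemma sum_tuple_succ (d k : ℕ) (f : (Fin (d+1) → ℕ) → ℝ) :
    ∑ ν ∈ Finset.Nat.antidiagonalTuple (d+1) k, f ν
      = ∑ p ∈ antidiagonal k, ∑ ν ∈ Finset.Nat.antidiagonalTuple d p.2, f (Fin.cons p.1 ν) := by
  rw [Finset.sum_sigma' (f := fun (p : ℕ × ℕ) (ν : Fin d → ℕ) => f (Fin.cons p.1 ν))]
  refine Finset.sum_bij' (i := fun ν _ => (⟨(ν 0, ∑ i, Fin.tail ν i), Fin.tail ν⟩ :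
      Σ _ : ℕ × ℕ, Fin d → ℕ))
    (j := fun z _ => Fin.cons z.1.1 z.2) ?_ ?_ ?_ ?_ ?_
  · intro ν hν
    have h := Finset.Nat.mem_antidiagonalTuple.mp hν
    rw [Fin.sum_univ_succ] at h
    simp only [Finset.mem_sigma, Finset.HasAntidiagonal.mem_antidiagonal, Finset.Nat.mem_antidiagonalTuple]
    exact ⟨h, trivial⟩
  · intro z hz
    simp only [Finset.mem_sigma, Finset.HasAntidiagonal.mem_antidiagonal,
      Finset.Nat.mem_antidiagonalTuple] at hz ⊢
    rw [Fin.sum_univ_succ]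
    simp only [Fin.cons_zero, Fin.cons_succ]
    rw [hz.2]
    exact hz.1
  · intro ν _
    simp [Fin.cons_self_tail]
  · intro z hz
    simp only [Finset.mem_sigma, Finset.HasAntidiagonal.mem_antidiagonal,
      Finset.Nat.mem_antidiagonalTuple] at hz
    refine Sigma.ext ?_ (heq_of_eq ?_)
    · simp only [Fin.cons_zero]
      rw [Prod.ext_iff]
      constructor
      · rfl
      · simp only [Fin.tail_cons]
        exact hz.2
    · simp [Fin.tail_cons]
  · intro ν _
    simp [Fin.cons_self_tail]

lemma lag_zero (a : ℝ) (m : ℕ) : lag a m 0 = F a m := by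
  unfold lag F
  rw [Finset.sum_eq_single 0]
  · simp
  · intro k _ hk
    rw [neg_zero, zero_pow hk]
    simp
  · intro h
    exact absurd (Finset.mem_range.mpr (Nat.succ_pos m)) h

lemma F_pos (a : ℝ) (ha : -1 < a) (m : ℕ) : 0 < F a m := by
  unfold F
  apply div_pos
  · apply Finset.prod_pos
    intro i _
    have : (0:ℝ) ≤ i := Nat.cast_nonneg i
    linarith
  · exact_mod_cast Nat.factorial_pos m

lemma tuple : ∀ (e : ℕ) (α x : Fin (e+1) → ℝ) (k : ℕ),
    ∑ ν ∈ Finset.Nat.antidiagonalTuple (e+1) k, ∏ i, lag (α i) (ν i) (x i)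
      = lag ((∑ i, α i) + e) k (∑ i, x i) := by
  intro e
  induction e with
  | zero =>
    intro α x k
    rw [Finset.Nat.antidiagonalTuple_one, Finset.sum_singleton]
    simp [Fin.prod_univ_one, Fin.sum_univ_one]
  | succ e ih =>
    intro α x k
    rw [sum_tuple_succ]
    have h1 : ∀ p ∈ antidiagonal k,
        ∑ ν ∈ Finset.Nat.antidiagonalTuple (e+1) p.2,
          ∏ i, lag (α i) ((Fin.cons p.1 ν : Fin (e+2) → ℕ) i) (x i)
        = lag (α 0) p.1 (x 0) *
            lag ((∑ i : Fin (e+1), α i.succ) + e) p.2 (∑ i : Fin (e+1), x i.succ) := by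
      intro p _
      rw [← ih (fun i => α i.succ) (fun i => x i.succ) p.2, Finset.mul_sum]
      refine Finset.sum_congr rfl fun ν _ => ?_
      rw [Fin.prod_univ_succ]
      simp [Fin.cons_zero, Fin.cons_succ]
    rw [Finset.sum_congr rfl h1]
    rw [conv (α 0) ((∑ i : Fin (e+1), α i.succ) + e) (x 0) (∑ i : Fin (e+1), x i.succ) k]
    rw [Fin.sum_univ_succ (f := α), Fin.sum_univ_succ (f := x)]
    push_cast
    ring_nf


theorem stmt16 (d : ℕ) (hd : 0 < d) (α : Fin d → ℝ) (hα : ∀ i, -1 < α i)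
    (δ : ℝ) (hδ : -1 < δ) (n : ℕ) (x : Fin d → ℝ) :
    (∑ k ∈ Finset.range (n+1), Ad δ (n-k) *
        ∑ ν ∈ Finset.Nat.antidiagonalTuple d k,
          (∏ i, lag (α i) (ν i) (x i)) * (∏ i, lag (α i) (ν i) 0) /
            (∏ i, lag (α i) (ν i) 0))
      = lag ((∑ i, α i) + δ + d) n (∑ i, x i) := by
  obtain _ | e := d
  · omega
  have hcancel : ∀ k : ℕ, ∀ ν ∈ Finset.Nat.antidiagonalTuple (e+1) k,
      (∏ i, lag (α i) (ν i) (x i)) * (∏ i, lag (α i) (ν i) 0) /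
        (∏ i, lag (α i) (ν i) 0) = ∏ i, lag (α i) (ν i) (x i) := by
    intro k ν _
    have hne : (∏ i, lag (α i) (ν i) 0) ≠ 0 := by
      apply ne_of_gt
      apply Finset.prod_pos
      intro i _
      rw [lag_zero]
      exact F_pos _ (hα i) _
    exact mul_div_cancel_right₀ _ hne
  have step1 : ∀ k ∈ Finset.range (n+1), Ad δ (n-k) *
      ∑ ν ∈ Finset.Nat.antidiagonalTuple (e+1) k,
        (∏ i, lag (α i) (ν i) (x i)) * (∏ i, lag (α i) (ν i) 0) /
          (∏ i, lag (α i) (ν i) 0)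
      = lag ((∑ i, α i) + e) k (∑ i, x i) * lag δ (n-k) 0 := by
    intro k _
    rw [Finset.sum_congr rfl (hcancel k), tuple e α x k, lag_zero]
    rw [mul_comm]
    rfl
  rw [Finset.sum_congr rfl step1]
  rw [← Finset.Nat.sum_antidiagonal_eq_sum_range_succ_mk
    (f := fun jk => lag ((∑ i, α i) + e) jk.1 (∑ i, x i) * lag δ jk.2 0)]
  rw [conv ((∑ i, α i) + e) δ (∑ i, x i) 0 n]
  rw [add_zero]
  congr 1
  push_cast
  ring
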